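/- Let E be the vector space over a field k with basis {aₙ : n < ω} ∪ {bₙ : n < ω}, let Aₙ = span(a₀,…,aₙ), Bₙ = span(b₀,…,bₙ), C₀ = span(a₀+b₀, a₁+b₁+a₀, a₂+b₂+a₁, …), D₀ = span(a₀+b₀, a₁+b₁, a₂+b₂, …), C₍n+1₎ = C₀ + Aₙ + Bₙ, D₍n+1₎ = D₀ + Aₙ + Bₙ. Then Cₙ ∩ Dₙ = span(a₀, b₀, …, a₍n₋₁₎, b₍n₋₁₎, aₙ + bₙ) for each n < ω; consequently Cₙ ∩ Dₙ ⊆ Aₙ + Bₙ ⊆ C₍n+1₎ ∩ D₍n+1₎. -/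

import Mathlib

/-- The vector space over `k` with basis `{aₙ} ∪ {bₙ}` (`n < ω`). -/
abbrev VecE (k : Type*) [Field k] := (ℕ ⊕ ℕ) →₀ k

variable (k : Type*) [Field k]

/-- The basis vector `aₙ`. -/
noncomputable def aV (n : ℕ) : VecE k := Finsupp.single (Sum.inl n) 1

/-- The basis vector `bₙ`. -/
noncomputable def bV (n : ℕ) : VecE k := Finsupp.single (Sum.inr n) 1

/-- `Aₙ = span(a₀, …, aₙ)`. -/
noncomputable def Asub (n : ℕ) : Submodule k (VecE k) := Submodule.span k {v | ∃ i ≤ n, v = aV k i}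

/-- `Bₙ = span(b₀, …, bₙ)`. -/
noncomputable def Bsub (n : ℕ) : Submodule k (VecE k) := Submodule.span k {v | ∃ i ≤ n, v = bV k i}

/-- `C₀ = span(a₀+b₀, a₁+b₁+a₀, a₂+b₂+a₁, …)`. -/
noncomputable def Czero : Submodule k (VecE k) :=
  Submodule.span k ({aV k 0 + bV k 0} ∪ {v | ∃ i, v = aV k (i+1) + bV k (i+1) + aV k i})

/-- `D₀ = span(a₀+b₀, a₁+b₁, a₂+b₂, …)`. -/
noncomputable def Dzero : Submodule k (VecE k) := Submodule.span k {v | ∃ i, v = aV k i + bV k i}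

/-- `C₀` and `C₍n+1₎ = C₀ + Aₙ + Bₙ`. -/
noncomputable def Csub : ℕ → Submodule k (VecE k)
  | 0 => Czero k
  | n + 1 => Czero k ⊔ Asub k n ⊔ Bsub k n

/-- `D₀` and `D₍n+1₎ = D₀ + Aₙ + Bₙ`. -/
noncomputable def Dsub : ℕ → Submodule k (VecE k)
  | 0 => Dzero k
  | n + 1 => Dzero k ⊔ Asub k n ⊔ Bsub k n

@[simp] lemma aV_apply_inl (m j : ℕ) : aV k m (Sum.inl j) = if m = j then 1 else 0 := by
  simp [aV, Finsupp.single_apply]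
@[simp] lemma aV_apply_inr (m j : ℕ) : aV k m (Sum.inr j) = 0 := by
  simp [aV, Finsupp.single_apply]
@[simp] lemma bV_apply_inl (m j : ℕ) : bV k m (Sum.inl j) = 0 := by
  simp [bV, Finsupp.single_apply]
@[simp] lemma bV_apply_inr (m j : ℕ) : bV k m (Sum.inr j) = if m = j then 1 else 0 := by
  simp [bV, Finsupp.single_apply]

/-- Auxiliary: the submodule of vectors `x` with `x(aᵢ) = x(bᵢ)` for `i ≥ n`. -/
def Kd (n : ℕ) : Submodule k (VecE k) where
  carrier := {x | ∀ i, n ≤ i → x (Sum.inl i) = x (Sum.inr i)}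
  add_mem' := by intro a b ha hb i hi; simp [ha i hi, hb i hi]
  zero_mem' := by intro i hi; simp
  smul_mem' := by intro c a ha i hi; simp [ha i hi]

/-- Auxiliary: the submodule of vectors `x` with `x(aᵢ) = x(bᵢ) + x(bᵢ₊₁)` for `i ≥ n`. -/
def Kc (n : ℕ) : Submodule k (VecE k) where
  carrier := {x | ∀ i, n ≤ i → x (Sum.inl i) = x (Sum.inr i) + x (Sum.inr (i+1))}
  add_mem' := by intro a b ha hb i hi; simp [ha i hi, hb i hi]; ring
  zero_mem' := by intro i hi; simp
  smul_mem' := by intro c a ha i hi; simp [ha i hi]; ring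

lemma aV_mem_Asub {i n : ℕ} (h : i ≤ n) : aV k i ∈ Asub k n :=
  Submodule.subset_span ⟨i, h, rfl⟩

lemma bV_mem_Bsub {i n : ℕ} (h : i ≤ n) : bV k i ∈ Bsub k n :=
  Submodule.subset_span ⟨i, h, rfl⟩

lemma Dsub_le_Kd (n : ℕ) : Dsub k n ≤ Kd k n := by
  have hD0 : ∀ m, Dzero k ≤ Kd k m := by
    intro m
    rw [Dzero, Submodule.span_le]
    rintro _ ⟨i, rfl⟩ j hj
    simp
  have hA : ∀ m, Asub k m ≤ Kd k (m+1) := by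
    intro m
    rw [Asub, Submodule.span_le]
    rintro _ ⟨i, hi, rfl⟩ j hj
    have : i ≠ j := by omega
    simp [this]
  have hB : ∀ m, Bsub k m ≤ Kd k (m+1) := by
    intro m
    rw [Bsub, Submodule.span_le]
    rintro _ ⟨i, hi, rfl⟩ j hj
    have : i ≠ j := by omega
    simp [this]
  cases n with
  | zero => exact hD0 0
  | succ m => exact sup_le (sup_le (hD0 (m+1)) (hA m)) (hB m)

lemma Csub_le_Kc (n : ℕ) : Csub k n ≤ Kc k n := by
  have hC0 : ∀ m, Czero k ≤ Kc k m := by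
    intro m
    rw [Czero, Submodule.span_le]
    rintro _ (rfl | ⟨i, rfl⟩) j hj
    · have : (0:ℕ) ≠ j + 1 := by omega
      simp [this]
    · simp only [Finsupp.add_apply, aV_apply_inl, aV_apply_inr, bV_apply_inl, bV_apply_inr]
      split_ifs <;> first | omega | ring
  have hA : ∀ m, Asub k m ≤ Kc k (m+1) := by
    intro m
    rw [Asub, Submodule.span_le]
    rintro _ ⟨i, hi, rfl⟩ j hj
    have : i ≠ j := by omega
    simp [this]
  have hB : ∀ m, Bsub k m ≤ Kc k (m+1) := by
    intro m
    rw [Bsub, Submodule.span_le]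
    rintro _ ⟨i, hi, rfl⟩ j hj
    have h1 : i ≠ j := by omega
    have h2 : i ≠ j + 1 := by omega
    simp [h1, h2]
  cases n with
  | zero => exact hC0 0
  | succ m => exact sup_le (sup_le (hC0 (m+1)) (hA m)) (hB m)

lemma low_mem (n : ℕ) (v : VecE k)
    (h : ∀ j, n ≤ j → v (Sum.inl j) = 0 ∧ v (Sum.inr j) = 0) :
    v ∈ Submodule.span k ({v | ∃ i < n, v = aV k i} ∪ {v | ∃ i < n, v = bV k i}) := by
  have hs : v ∈ Finsupp.supported k k
      ({s | ∃ i < n, s = Sum.inl i} ∪ {s | ∃ i < n, s = Sum.inr i}) := by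
    rw [Finsupp.mem_supported]
    intro s hs
    rw [Finset.mem_coe, Finsupp.mem_support_iff] at hs
    rcases s with j | j
    · left
      refine ⟨j, ?_, rfl⟩
      by_contra h'
      exact hs (h j (by omega)).1
    · right
      refine ⟨j, ?_, rfl⟩
      by_contra h'
      exact hs (h j (by omega)).2
  rw [Finsupp.supported_eq_span_single] at hs
  refine Submodule.span_mono ?_ hs
  rintro _ ⟨s, (⟨i, hi, rfl⟩ | ⟨i, hi, rfl⟩), rfl⟩
  · exact Or.inl ⟨i, hi, rfl⟩
  · exact Or.inr ⟨i, hi, rfl⟩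

lemma eV_mem (n : ℕ) : aV k n + bV k n ∈ Csub k n ⊓ Dsub k n := by
  constructor
  · cases n with
    | zero => exact Submodule.subset_span (Or.inl rfl)
    | succ m =>
      have h1 : aV k (m+1) + bV k (m+1) + aV k m ∈ Czero k :=
        Submodule.subset_span (Or.inr ⟨m, rfl⟩)
      have h2 : aV k m ∈ Asub k m := aV_mem_Asub k le_rfl
      have h3 : aV k (m+1) + bV k (m+1)
          = (aV k (m+1) + bV k (m+1) + aV k m) - aV k m := (add_sub_cancel_right _ _).symm
      show aV k (m+1) + bV k (m+1) ∈ Czero k ⊔ Asub k m ⊔ Bsub k m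
      rw [h3]
      exact Submodule.sub_mem _
        (Submodule.mem_sup_left (Submodule.mem_sup_left h1))
        (Submodule.mem_sup_left (Submodule.mem_sup_right h2))
  · have h1 : aV k n + bV k n ∈ Dzero k := Submodule.subset_span ⟨n, rfl⟩
    cases n with
    | zero => exact h1
    | succ m => exact Submodule.mem_sup_left (Submodule.mem_sup_left h1)

theorem Csub_inf_Dsub (n : ℕ) :
    Csub k n ⊓ Dsub k n =
      Submodule.span k
        ({v | ∃ i < n, v = aV k i} ∪ {v | ∃ i < n, v = bV k i} ∪ {aV k n + bV k n}) ∧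
    Csub k n ⊓ Dsub k n ≤ Asub k n ⊔ Bsub k n ∧
    Asub k n ⊔ Bsub k n ≤ Csub k (n + 1) ⊓ Dsub k (n + 1) := by
  have heq : Csub k n ⊓ Dsub k n =
      Submodule.span k
        ({v | ∃ i < n, v = aV k i} ∪ {v | ∃ i < n, v = bV k i} ∪ {aV k n + bV k n}) := by
    apply le_antisymm
    · intro x hx
      have hc := Csub_le_Kc k n hx.1
      have hd := Dsub_le_Kd k n hx.2
      have hr0 : ∀ j, n < j → x (Sum.inr j) = 0 := by
        intro j hj
        obtain ⟨i, rfl⟩ : ∃ i, j = i + 1 := ⟨j - 1, by omega⟩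
        have h1 := hc i (by omega)
        have h2 := hd i (by omega)
        linear_combination h2 - h1
      have hl0 : ∀ j, n < j → x (Sum.inl j) = 0 := fun j hj =>
        (hd j (le_of_lt hj)).trans (hr0 j hj)
      have hn : x (Sum.inl n) = x (Sum.inr n) := hd n le_rfl
      have hy : x - x (Sum.inl n) • (aV k n + bV k n) ∈
          Submodule.span k ({v | ∃ i < n, v = aV k i} ∪ {v | ∃ i < n, v = bV k i}) := by
        apply low_mem
        intro j hj
        rcases eq_or_lt_of_le hj with rfl | hj'
        · constructor <;> simp [hn]
        · have h1 : n ≠ j := by omega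
          constructor <;> simp [Finsupp.sub_apply, h1, hl0 j hj', hr0 j hj']
      have hx' : x = (x - x (Sum.inl n) • (aV k n + bV k n))
          + x (Sum.inl n) • (aV k n + bV k n) := (sub_add_cancel _ _).symm
      rw [hx']
      refine Submodule.add_mem _ (Submodule.span_mono Set.subset_union_left hy) ?_
      exact Submodule.smul_mem _ _
        (Submodule.subset_span (Or.inr rfl))
    · rw [Submodule.span_le]
      rintro v ((⟨i, hi, rfl⟩ | ⟨i, hi, rfl⟩) | hv)
      · obtain ⟨m, rfl⟩ : ∃ m, n = m + 1 := ⟨n - 1, by omega⟩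
        have h := aV_mem_Asub k (show i ≤ m by omega) (n := m)
        exact ⟨Submodule.mem_sup_left (Submodule.mem_sup_right h),
          Submodule.mem_sup_left (Submodule.mem_sup_right h)⟩
      · obtain ⟨m, rfl⟩ : ∃ m, n = m + 1 := ⟨n - 1, by omega⟩
        have h := bV_mem_Bsub k (show i ≤ m by omega) (n := m)
        exact ⟨Submodule.mem_sup_right h, Submodule.mem_sup_right h⟩
      · rw [Set.mem_singleton_iff] at hv
        rw [hv]
        exact eV_mem k n
  refine ⟨heq, ?_, ?_⟩
  · rw [heq, Submodule.span_le]
    rintro v ((⟨i, hi, rfl⟩ | ⟨i, hi, rfl⟩) | hv)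
    · exact Submodule.mem_sup_left (aV_mem_Asub k (by omega))
    · exact Submodule.mem_sup_right (bV_mem_Bsub k (by omega))
    · rw [Set.mem_singleton_iff] at hv
      rw [hv]
      exact Submodule.add_mem _ (Submodule.mem_sup_left (aV_mem_Asub k le_rfl))
        (Submodule.mem_sup_right (bV_mem_Bsub k le_rfl))
  · apply le_inf
    · show Asub k n ⊔ Bsub k n ≤ Czero k ⊔ Asub k n ⊔ Bsub k n
      exact sup_le (le_sup_of_le_left le_sup_right) le_sup_right
    · show Asub k n ⊔ Bsub k n ≤ Dzero k ⊔ Asub k n ⊔ Bsub k n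
      exact sup_le (le_sup_of_le_left le_sup_right) le_sup_right
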